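/- arXiv:0904.2273 — 2 statements merged into one kernel-verified Lean document; each statement's English description precedes it below -/
import Mathlib

section
/- Let R be a PVMD and let A and B be nonzero ideals of R such that (A+B)_t = R. Then (A ∩ B)_t = (AB)_t. -/
/-!
Common definitions: star operations (`v`- and `t`-closure), `t`-ideals, `t`-invertibility,
PVMDs, overrings, `t`-linked and `t`-flat overrings, localizations inside the quotient
field, Nagata and Kaplansky transforms, endomorphism rings of ideals.
-/

open scoped Classical

namespace PVMDPaper

noncomputable section

section Generic

variable (A : Type*) [CommRing A] (K : Type*) [Field K] [Algebra A K]

/-- The image of an integral ideal of `A` inside the field `K`, as an `A`-submodule of `K`. -/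
def toK (I : Ideal A) : Submodule A K := Submodule.map (Algebra.linearMap A K) I

variable {A K}

/-- The dual `I⁻¹ = (A : I) = {x ∈ K : x I ⊆ A}` of a submodule of `K`. -/
def dual (I : Submodule A K) : Submodule A K := 1 / I

/-- The `v`-closure `I_v = (I⁻¹)⁻¹`. -/
def vOp (I : Submodule A K) : Submodule A K := 1 / (1 / I)

/-- The `t`-closure `I_t`: the union of `J_v` where `J` ranges over the nonzero finitely
generated submodules `J ≤ I` (the union of this directed family is its supremum). -/
def tOp (I : Submodule A K) : Submodule A K :=
  sSup {V | ∃ J : Submodule A K, J ≠ ⊥ ∧ J.FG ∧ J ≤ I ∧ V = vOp J}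

variable (K)

/-- An (integral) ideal `I` of `A` is a `t`-ideal if `I = I_t`. -/
def IsTIdeal (I : Ideal A) : Prop := tOp (toK A K I) = toK A K I

/-- An ideal `I` is `t`-invertible if `(I I⁻¹)_t = A`. -/
def IsTInvertible (I : Ideal A) : Prop := tOp (toK A K I * dual (toK A K I)) = 1

/-- A `t`-maximal ideal: an ideal maximal in the set of proper integral `t`-ideals. -/
def IsTMaximal (M : Ideal A) : Prop :=
  M ≠ ⊤ ∧ IsTIdeal K M ∧ ∀ J : Ideal A, J ≠ ⊤ → IsTIdeal K J → M ≤ J → J = M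

variable (A)

/-- `A` is a Prüfer `v`-multiplication domain: every nonzero finitely generated ideal
is `t`-invertible. -/
def IsPVMD : Prop := ∀ I : Ideal A, I ≠ ⊥ → I.FG → IsTInvertible K I

/-- `Spec_t(A)` is Noetherian: the ascending chain condition on radical `t`-ideals. -/
def TSpecNoetherian : Prop :=
  ∀ f : ℕ →o Ideal A, (∀ n, IsTIdeal K (f n) ∧ (f n).radical = f n) →
    ∃ n, ∀ m, n ≤ m → f m = f n

variable {A K}

/-- A submodule of `K` is a subring of `K` iff it contains `1` and is closed under
multiplication (being an additive subgroup already). -/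
def IsSubringOf (S : Submodule A K) : Prop :=
  (1 : K) ∈ S ∧ ∀ x ∈ S, ∀ y ∈ S, x * y ∈ S

variable (K)

/-- The localization `A_P = {a/s : a ∈ A, s ∈ A ∖ P}` viewed as a subset of `K`. -/
def loc (P : Ideal A) : Set K :=
  {x | ∃ a s : A, s ∉ P ∧ x * algebraMap A K s = algebraMap A K a}

/-- The set `J A_P = {a/s : a ∈ J, s ∈ A ∖ P} ⊆ K`. -/
def locIdealAt (J P : Ideal A) : Set K :=
  {x | ∃ a ∈ J, ∃ s : A, s ∉ P ∧ x * algebraMap A K s = algebraMap A K a}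

/-- `Z(A, I)`: the set of zero divisors on `A/I`. -/
def ZSet (I : Ideal A) : Set A := {x | ∃ a : A, a ∉ I ∧ x * a ∈ I}

/-- `Q` is a maximal prime ideal of `Z(A,I)`: a prime contained in `Z(A,I)`, maximal
(under inclusion) among the primes contained in `Z(A,I)`. -/
def MaxPrimeOfZ (I Q : Ideal A) : Prop :=
  Q.IsPrime ∧ (Q : Set A) ⊆ ZSet I ∧
    ∀ Q' : Ideal A, Q'.IsPrime → (Q' : Set A) ⊆ ZSet I → Q ≤ Q' → Q' = Q

end Generic

section Overring

variable {R : Type*} [CommRing R] [IsDomain R]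
variable {K : Type*} [Field K] [Algebra R K] [IsFractionRing R K]

/-- The extension `IT` of an ideal `I` of `R` to an overring `T`, as a `T`-submodule of `K`. -/
def extendI (I : Ideal R) (T : Subalgebra R K) : Submodule T K :=
  Submodule.span T (algebraMap R K '' (I : Set R))

/-- The extension `IT` of an `R`-submodule `I` of `K` to an overring `T`. -/
def extendS (I : Submodule R K) (T : Subalgebra R K) : Submodule T K :=
  Submodule.span T (I : Set K)

/-- An overring `T` of `R` is `t`-linked over `R` if `(IT)⁻¹ = T` for each finitely
generated ideal `I` of `R` with `I⁻¹ = R`. -/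
def IsTLinked (T : Subalgebra R K) : Prop :=
  ∀ I : Ideal R, I.FG → dual (toK R K I) = 1 → dual (extendI I T) = 1

/-- An overring `T` of `R` is `t`-flat over `R` if `T_M = R_{M ∩ R}` for each
`t`-maximal ideal `M` of `T`. -/
def IsTFlat (T : Subalgebra R K) : Prop :=
  ∀ M : Ideal T, IsTMaximal K M → loc K M = loc K (M.comap (algebraMap R T))

variable (R K)

/-- `R` is a `tQR`-domain: a PVMD all of whose `t`-linked overrings are localizations
of `R` at multiplicative sets. -/
def IsTQR : Prop :=
  IsPVMD R K ∧ ∀ T : Subalgebra R K, IsTLinked T → ∃ S : Submonoid R,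
    (T : Set K) = {x | ∃ a : R, ∃ s ∈ S, x * algebraMap R K s = algebraMap R K a}

variable {R K}
variable (K)

/-- The endomorphism ring `(I : I) = {x ∈ K : x I ⊆ I}` of an ideal `I`, as an
overring of `R`. -/
def endoRing (I : Ideal R) : Subalgebra R K where
  carrier := {x : K | ∀ y ∈ toK R K I, x * y ∈ toK R K I}
  mul_mem' := by
    intro a b ha hb y hy
    rw [mul_assoc]
    exact ha _ (hb _ hy)
  one_mem' := by
    intro y hy
    rwa [one_mul]
  add_mem' := by
    intro a b ha hb y hy
    rw [add_mul]
    exact Submodule.add_mem _ (ha y hy) (hb y hy)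
  zero_mem' := by
    intro y hy
    rw [zero_mul]
    exact Submodule.zero_mem _
  algebraMap_mem' := by
    intro r y hy
    rw [← Algebra.smul_def]
    exact Submodule.smul_mem _ r hy

set_option synthInstance.maxHeartbeats 400000 in
/-- The ideal `I`, viewed as an ideal of its endomorphism ring `(I : I)`. -/
def idealInEndo (I : Ideal R) : Ideal (endoRing K I) where
  carrier := {x | (x : K) ∈ toK R K I}
  add_mem' := by
    intro a b ha hb
    simp only [Set.mem_setOf_eq] at *
    rw [AddMemClass.coe_add]
    exact Submodule.add_mem _ ha hb
  zero_mem' := by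
    simp only [Set.mem_setOf_eq, ZeroMemClass.coe_zero]
    exact Submodule.zero_mem _
  smul_mem' := by
    intro c x hx
    simp only [Set.mem_setOf_eq] at *
    rw [smul_eq_mul, MulMemClass.coe_mul]
    exact c.2 _ hx

/-- The Kaplansky transform `Ω(I) = {u ∈ K : ∀ a ∈ I, ∃ n ≥ 1, u aⁿ ∈ R}`, as an
overring of `R`. -/
def kaplansky (I : Ideal R) : Subalgebra R K where
  carrier := {u : K | ∀ a ∈ I, ∃ n : ℕ, 0 < n ∧
    ∃ r : R, u * (algebraMap R K a) ^ n = algebraMap R K r}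
  mul_mem' := by
    intro u v hu hv a ha
    obtain ⟨n, hn, r, hr⟩ := hu a ha
    obtain ⟨m, hm, s, hs⟩ := hv a ha
    refine ⟨n + m, by omega, r * s, ?_⟩
    rw [map_mul, ← hr, ← hs, pow_add]
    ring
  one_mem' := by
    intro a ha
    exact ⟨1, one_pos, a, by rw [pow_one, one_mul]⟩
  add_mem' := by
    intro u v hu hv a ha
    obtain ⟨n, hn, r, hr⟩ := hu a ha
    obtain ⟨m, hm, s, hs⟩ := hv a ha
    refine ⟨n + m, by omega, r * a ^ m + s * a ^ n, ?_⟩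
    rw [map_add, map_mul, map_mul, map_pow, map_pow, ← hr, ← hs, pow_add, add_mul]
    ring
  zero_mem' := by
    intro a ha
    exact ⟨1, one_pos, 0, by rw [map_zero, zero_mul]⟩
  algebraMap_mem' := by
    intro r a ha
    exact ⟨1, one_pos, r * a, by rw [map_mul, pow_one]⟩

/-- The Nagata (ideal) transform `T(I) = ⋃_{n ≥ 1} (R : Iⁿ)`, as an overring of `R`. -/
def nagata (I : Ideal R) : Subalgebra R K where
  carrier := {x : K | ∃ n : ℕ, ∀ y ∈ I ^ (n + 1),
    ∃ r : R, x * algebraMap R K y = algebraMap R K r}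
  mul_mem' := by
    intro x x' hx hx'
    obtain ⟨n, hn⟩ := hx
    obtain ⟨m, hm⟩ := hx'
    refine ⟨n + m + 1, fun y hy => ?_⟩
    rw [show n + m + 1 + 1 = (n + 1) + (m + 1) by omega, pow_add] at hy
    refine Submodule.mul_induction_on hy ?_ ?_
    · intro a ha b hb
      obtain ⟨r, hr⟩ := hn a ha
      obtain ⟨s, hs⟩ := hm b hb
      refine ⟨r * s, ?_⟩
      rw [map_mul, map_mul, ← hr, ← hs]
      ring
    · rintro y1 y2 ⟨r1, h1⟩ ⟨r2, h2⟩
      exact ⟨r1 + r2, by rw [map_add, map_add, mul_add, h1, h2]⟩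
  one_mem' := ⟨0, fun y _ => ⟨y, by rw [one_mul]⟩⟩
  add_mem' := by
    intro x x' hx hx'
    obtain ⟨n, hn⟩ := hx
    obtain ⟨m, hm⟩ := hx'
    refine ⟨n + m + 1, fun y hy => ?_⟩
    have h1 : y ∈ I ^ (n + 1) := Ideal.pow_le_pow_right (by omega) hy
    have h2 : y ∈ I ^ (m + 1) := Ideal.pow_le_pow_right (by omega) hy
    obtain ⟨r, hr⟩ := hn y h1
    obtain ⟨s, hs⟩ := hm y h2
    exact ⟨r + s, by rw [map_add, add_mul, hr, hs]⟩
  zero_mem' := ⟨0, fun y _ => ⟨0, by rw [map_zero, zero_mul]⟩⟩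
  algebraMap_mem' := by
    intro r
    exact ⟨0, fun y _ => ⟨r * y, by rw [map_mul]⟩⟩

end Overring

section Lemmas

variable {A : Type*} [CommRing A] {K : Type*} [Field K] [Algebra A K]

lemma one_div_antitone {I J : Submodule A K} (h : I ≤ J) :
    (1 : Submodule A K) / J ≤ 1 / I := by
  intro x hx
  rw [Submodule.mem_div_iff_forall_mul_mem] at hx ⊢
  exact fun y hy => hx y (h hy)

lemma le_vOp (I : Submodule A K) : I ≤ vOp I := by
  intro x hx
  rw [vOp, Submodule.mem_div_iff_forall_mul_mem]
  intro y hy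
  rw [Submodule.mem_div_iff_forall_mul_mem] at hy
  rw [mul_comm]
  exact hy x hx

lemma vOp_mono {I J : Submodule A K} (h : I ≤ J) : vOp I ≤ vOp J :=
  one_div_antitone (one_div_antitone h)

lemma vOp_mul_vOp_le (I J : Submodule A K) : vOp I * vOp J ≤ vOp (I * J) := by
  simp only [vOp]
  refine Submodule.mul_le.2 fun x hx y hy => ?_
  rw [Submodule.mem_div_iff_forall_mul_mem]
  intro z hz
  have hyz : y * z ∈ (1 : Submodule A K) / I := by
    rw [Submodule.mem_div_iff_forall_mul_mem]
    intro a ha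
    have hza : z * a ∈ (1 : Submodule A K) / J := by
      rw [Submodule.mem_div_iff_forall_mul_mem]
      intro b hb
      have := Submodule.mem_div_iff_forall_mul_mem.1 hz (a * b) (Submodule.mul_mem_mul ha hb)
      rwa [show z * (a * b) = z * a * b by ring] at this
    have := Submodule.mem_div_iff_forall_mul_mem.1 hy (z * a) hza
    rwa [show y * (z * a) = y * z * a by ring] at this
  have := Submodule.mem_div_iff_forall_mul_mem.1 hx (y * z) hyz
  rwa [show x * (y * z) = x * y * z by ring] at this

lemma tOp_mono {I J : Submodule A K} (h : I ≤ J) : tOp I ≤ tOp J := by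
  refine sSup_le_sSup fun V hV => ?_
  obtain ⟨J', h1, h2, h3, rfl⟩ := hV
  exact ⟨J', h1, h2, h3.trans h, rfl⟩

end Lemmas

section Statements

variable {R : Type*} [CommRing R] [IsDomain R]
variable {K : Type*} [Field K] [Algebra R K] [IsFractionRing R K]

/-- Let `R` be a PVMD and `A`, `B` nonzero ideals of `R` with
`(A + B)_t = R`. Then `(A ∩ B)_t = (AB)_t`. -/
theorem statement_8 (hR : IsPVMD R K) (A B : Ideal R) (hA : A ≠ ⊥) (hB : B ≠ ⊥)
    (h : tOp (toK R K (A + B)) = 1) :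
    tOp (toK R K (A ⊓ B)) = tOp (toK R K (A * B)) := by
  have hmapinj : Function.Injective (algebraMap R K) := IsFractionRing.injective R K
  set S := toK R K (A + B) with hSdef
  -- `1 ∈ tOp S`
  have h1 : (1 : K) ∈ tOp S := by rw [h]; exact Submodule.one_le.1 le_rfl
  -- the defining family of `tOp S` is nonempty and directed
  set s : Set (Submodule R K) :=
    {V | ∃ J : Submodule R K, J ≠ ⊥ ∧ J.FG ∧ J ≤ S ∧ V = vOp J} with hsdef
  obtain ⟨a, haA, ha0⟩ := Submodule.ne_bot_iff A |>.1 hA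
  have haK : algebraMap R K a ∈ S :=
    Submodule.mem_map_of_mem ((le_sup_left : A ≤ A + B) haA)
  have haK0 : algebraMap R K a ≠ 0 := (map_ne_zero_iff _ hmapinj).2 ha0
  have hne : s.Nonempty := by
    refine ⟨vOp (Submodule.span R {algebraMap R K a}),
      Submodule.span R {algebraMap R K a}, ?_, Submodule.fg_span_singleton _,
      (Submodule.span_singleton_le_iff_mem _ _).2 haK, rfl⟩
    simpa [Submodule.span_singleton_eq_bot] using haK0
  have hdir : DirectedOn (· ≤ ·) s := by
    rintro V ⟨J1, hJ1b, hJ1f, hJ1le, rfl⟩ W ⟨J2, hJ2b, hJ2f, hJ2le, rfl⟩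
    refine ⟨vOp (J1 ⊔ J2), ⟨J1 ⊔ J2, ?_, hJ1f.sup hJ2f, sup_le hJ1le hJ2le, rfl⟩,
      vOp_mono le_sup_left, vOp_mono le_sup_right⟩
    intro hb
    exact hJ1b (le_bot_iff.1 (hb ▸ (le_sup_left : J1 ≤ J1 ⊔ J2)))
  rw [tOp] at h1
  obtain ⟨V, ⟨S₀, hS₀b, hS₀f, hS₀le, rfl⟩, h1v⟩ :=
    (Submodule.mem_sSup_of_directed hne hdir).1 h1
  -- `toK (A ⊓ B) * S ≤ toK (A * B)`
  have hid : (A ⊓ B) * (A + B) ≤ A * B := by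
    rw [mul_add]
    refine sup_le (Ideal.mul_le.2 fun r hr t ht => ?_) (Ideal.mul_le.2 fun r hr t ht => ?_)
    · rw [mul_comm r t]; exact Ideal.mul_mem_mul ht hr.2
    · exact Ideal.mul_mem_mul hr.1 ht
  have htoKmul : ∀ I J : Ideal R, toK R K (I * J) = toK R K I * toK R K J := by
    intro I J
    have hlm : Algebra.linearMap R K = (Algebra.ofId R K).toLinearMap := rfl
    rw [toK, toK, toK, hlm]
    exact Submodule.map_mul I J (Algebra.ofId R K)
  have hCS : toK R K (A ⊓ B) * S ≤ toK R K (A * B) := by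
    rw [hSdef, ← htoKmul]
    exact Submodule.map_mono hid
  refine le_antisymm ?_ (tOp_mono (Submodule.map_mono Ideal.mul_le_inf))
  refine sSup_le ?_
  rintro V ⟨J, hJb, hJf, hJle, rfl⟩
  obtain ⟨x, hx, hx0⟩ := Submodule.ne_bot_iff J |>.1 hJb
  obtain ⟨y, hy, hy0⟩ := Submodule.ne_bot_iff S₀ |>.1 hS₀b
  have hJS₀b : J * S₀ ≠ ⊥ := by
    refine (Submodule.ne_bot_iff _).2 ⟨x * y, Submodule.mul_mem_mul hx hy, mul_ne_zero hx0 hy0⟩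
  have hmem : vOp (J * S₀) ∈
      {V | ∃ J' : Submodule R K, J' ≠ ⊥ ∧ J'.FG ∧ J' ≤ toK R K (A * B) ∧ V = vOp J'} :=
    ⟨J * S₀, hJS₀b, hJf.mul hS₀f,
      (mul_le_mul' hJle hS₀le).trans hCS, rfl⟩
  refine le_trans ?_ (le_sSup hmem)
  intro z hz
  have : z * 1 ∈ vOp J * vOp S₀ := Submodule.mul_mem_mul hz h1v
  rw [mul_one] at this
  exact vOp_mul_vOp_le _ _ this

end Statements

end

end PVMDPaper
end

section
/- Let R be a PVMD and I a primary t-ideal of R. If I⁻¹ is a subring of the quotient field K, then I⁻¹ = (I:I). -/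
/-!
Common definitions: star operations (`v`- and `t`-closure), `t`-ideals, `t`-invertibility,
PVMDs, overrings, `t`-linked and `t`-flat overrings, localizations inside the quotient
field, Nagata and Kaplansky transforms, endomorphism rings of ideals.
-/

open scoped Classical

namespace PVMDPaper

noncomputable section

section Statements

variable {R : Type*} [CommRing R] [IsDomain R]
variable {K : Type*} [Field K] [Algebra R K] [IsFractionRing R K]


section AuxLemmas

variable {R : Type*} [CommRing R] [IsDomain R]
variable {K : Type*} [Field K] [Algebra R K] [IsFractionRing R K]

lemma mem_toK' {I : Ideal R} {z : K} :
    z ∈ toK R K I ↔ ∃ i ∈ I, algebraMap R K i = z := by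
  simp [toK, Submodule.mem_map, Algebra.linearMap_apply]

lemma toK_le_one (I : Ideal R) : toK R K I ≤ (1 : Submodule R K) := by
  intro z hz
  obtain ⟨i, _, rfl⟩ := mem_toK'.mp hz
  exact Submodule.mem_one.mpr ⟨i, rfl⟩

lemma mem_dual' {M : Submodule R K} {x : K} :
    x ∈ dual M ↔ ∀ y ∈ M, x * y ∈ (1 : Submodule R K) :=
  Submodule.mem_div_iff_forall_mul_mem

lemma mem_vOp' {M : Submodule R K} {x : K} :
    x ∈ vOp M ↔ ∀ y ∈ (1 : Submodule R K) / M, x * y ∈ (1 : Submodule R K) :=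
  Submodule.mem_div_iff_forall_mul_mem

lemma vOp_mono_s9 {M N : Submodule R K} (h : M ≤ N) : vOp M ≤ vOp N := by
  have h1 : (1 : Submodule R K) / N ≤ 1 / M := fun x hx =>
    Submodule.mem_div_iff_forall_mul_mem.mpr fun y hy =>
      Submodule.mem_div_iff_forall_mul_mem.mp hx y (h hy)
  intro x hx
  exact Submodule.mem_div_iff_forall_mul_mem.mpr fun y hy =>
    Submodule.mem_div_iff_forall_mul_mem.mp hx y (h1 hy)

lemma pow_mem_vOp_pow {F : Submodule R K} {z : K} (hz : z ∈ vOp F) :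
    ∀ m : ℕ, ∀ w ∈ (1 : Submodule R K) / F ^ m, z ^ m * w ∈ (1 : Submodule R K) := by
  intro m
  induction m with
  | zero =>
    intro w hw
    have h1 : (1 : K) ∈ (F ^ 0 : Submodule R K) := by
      rw [pow_zero]
      exact Submodule.mem_one.mpr ⟨1, map_one _⟩
    have := Submodule.mem_div_iff_forall_mul_mem.mp hw 1 h1
    simpa using this
  | succ m ih =>
    intro w hw
    have hzw : z * w ∈ (1 : Submodule R K) / F ^ m := by
      rw [Submodule.mem_div_iff_forall_mul_mem]
      intro y hy
      have hwy : w * y ∈ (1 : Submodule R K) / F := by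
        rw [Submodule.mem_div_iff_forall_mul_mem]
        intro u hu
        have hyu : y * u ∈ F ^ (m + 1) := by
          rw [pow_succ]
          exact Submodule.mul_mem_mul hy hu
        have := Submodule.mem_div_iff_forall_mul_mem.mp hw _ hyu
        simpa [mul_assoc] using this
      have := Submodule.mem_div_iff_forall_mul_mem.mp hz _ hwy
      simpa [mul_assoc, mul_comm, mul_left_comm] using this
    have := ih (z * w) hzw
    have hgoal : z ^ (m + 1) * w = z ^ m * (z * w) := by ring
    rwa [hgoal]

lemma pow_le_one_of_le_one {F : Submodule R K} (hF : F ≤ 1) (n : ℕ) :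
    F ^ n ≤ (1 : Submodule R K) := by
  induction n with
  | zero => rw [pow_zero]
  | succ k ihk =>
    rw [pow_succ]
    calc F ^ k * F ≤ 1 * 1 := mul_le_mul' ihk hF
    _ = 1 := one_mul 1

lemma one_div_mem_of_le_one {F : Submodule R K} (hF : F ≤ 1) (n : ℕ) :
    (1 : K) ∈ (1 : Submodule R K) / F ^ n := by
  rw [Submodule.mem_div_iff_forall_mul_mem]
  intro y hy
  simpa using pow_le_one_of_le_one hF n hy

/-- If `F` is a nonzero f.g. submodule of `K` contained in `toK (I.radical)` for a
`t`-ideal `I`, then `F_v ⊆ toK (I.radical)`. -/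
lemma vOp_le_toK_radical (I : Ideal R) (htop : I ≠ ⊤) (htI : IsTIdeal K I)
    {F : Submodule R K} (hFbot : F ≠ ⊥) (hFfg : F.FG) (hFP : F ≤ toK R K I.radical) :
    vOp F ≤ toK R K I.radical := by
  obtain ⟨T, hT⟩ := id hFfg
  have hrad : ∀ t ∈ (T : Set K), ∃ p : R, p ∈ I.radical ∧ algebraMap R K p = t := by
    intro t ht
    exact mem_toK'.mp (hFP (hT ▸ Submodule.subset_span ht))
  choose! ρ hρ1 hρ2 using hrad
  set P₀ : Ideal R := Ideal.span (ρ '' (T : Set K)) with hP₀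
  have hP₀fg : P₀.FG := Submodule.fg_span (T.finite_toSet.image ρ)
  have hP₀le : P₀ ≤ I.radical := Ideal.span_le.mpr (by rintro _ ⟨t, ht, rfl⟩; exact hρ1 t ht)
  have hFP₀ : F = toK R K P₀ := by
    rw [← hT, toK, hP₀, Ideal.span, Submodule.map_span]
    congr 1
    ext z
    constructor
    · intro hz
      exact ⟨ρ z, ⟨z, hz, rfl⟩, by simp [Algebra.linearMap_apply, hρ2 z hz]⟩
    · rintro ⟨_, ⟨t, ht, rfl⟩, rfl⟩
      simpa [Algebra.linearMap_apply, hρ2 t ht] using ht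
  obtain ⟨n, hn⟩ := Ideal.exists_pow_le_of_le_radical_of_fg hP₀le hP₀fg
  have hFn : F ^ n ≤ toK R K I := by
    rw [hFP₀]
    have hmp : (toK R K P₀) ^ n = toK R K (P₀ ^ n) := by
      have := Submodule.map_pow (P₀ : Submodule R R) (Algebra.ofId R K) n
      exact this.symm
    rw [hmp]
    exact Submodule.map_mono hn
  intro z hz
  have hF1 : F ≤ (1 : Submodule R K) := le_trans hFP (toK_le_one _)
  have hz1 : z ∈ (1 : Submodule R K) := by
    have h1F : (1 : K) ∈ (1 : Submodule R K) / F :=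
      Submodule.mem_div_iff_forall_mul_mem.mpr fun y hy => by simpa using hF1 hy
    have := Submodule.mem_div_iff_forall_mul_mem.mp hz 1 h1F
    simpa using this
  obtain ⟨w, hw⟩ := Submodule.mem_one.mp hz1
  have hznv : z ^ n ∈ vOp (F ^ n) :=
    Submodule.mem_div_iff_forall_mul_mem.mpr (pow_mem_vOp_pow hz n)
  obtain ⟨f, hfF, hf0⟩ := Submodule.exists_mem_ne_zero_of_ne_bot hFbot
  have hFnbot : F ^ n ≠ ⊥ := by
    intro hb
    have : f ^ n ∈ F ^ n := Submodule.pow_mem_pow _ hfF n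
    rw [hb, Submodule.mem_bot] at this
    exact pow_ne_zero n hf0 this
  have hle : vOp (F ^ n) ≤ tOp (toK R K I) :=
    le_sSup ⟨F ^ n, hFnbot, Submodule.FG.pow hFfg n, hFn, rfl⟩
  have hznI : z ^ n ∈ toK R K I := htI ▸ hle hznv
  obtain ⟨i, hi, hie⟩ := mem_toK'.mp hznI
  have hwi : w ^ n = i := by
    apply IsFractionRing.injective R K
    rw [map_pow, hw, hie]
  exact mem_toK'.mpr ⟨w, Ideal.mem_radical_iff.mpr ⟨n, hwi ▸ hi⟩, hw⟩

/-- Comparability at the prime `I.radical` in a PVMD: any two elements become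
comparable (w.r.t. divisibility) after multiplying by a unit outside `I.radical`. -/
lemma comparability (hR : IsPVMD R K) (I : Ideal R) (htop : I ≠ ⊤) (htI : IsTIdeal K I)
    {u w : R} (hu : u ≠ 0) :
    ∃ s c : R, s ∉ I.radical ∧ (s * w = c * u ∨ s * u = c * w) := by
  have hPtop : I.radical ≠ ⊤ := fun h => htop (Ideal.radical_eq_top.mp h)
  set J : Ideal R := Ideal.span {u, w} with hJ
  have huJ' : u ∈ J := Ideal.subset_span (by simp)
  have hwJ' : w ∈ J := Ideal.subset_span (by simp)
  have hJbot : J ≠ ⊥ := by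
    intro h
    apply hu
    have := huJ'
    rw [h, Ideal.mem_bot] at this
    exact this
  have hJfg : J.FG := ⟨{u, w}, by simp [hJ]⟩
  have hInv := hR J hJbot hJfg
  set M := toK R K J * dual (toK R K J) with hM
  have h1M : (1 : K) ∈ tOp M := by
    rw [hInv]
    exact Submodule.mem_one.mpr ⟨1, map_one _⟩
  set S := {V : Submodule R K | ∃ J0 : Submodule R K, J0 ≠ ⊥ ∧ J0.FG ∧ J0 ≤ M ∧ V = vOp J0}
    with hS
  have hdir : DirectedOn (· ≤ ·) S := by
    rintro _ ⟨J1, h1b, h1f, h1le, rfl⟩ _ ⟨J2, h2b, h2f, h2le, rfl⟩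
    refine ⟨vOp (J1 ⊔ J2), ⟨J1 ⊔ J2, ?_, h1f.sup h2f, sup_le h1le h2le, rfl⟩,
      vOp_mono_s9 le_sup_left, vOp_mono_s9 le_sup_right⟩
    intro hb
    exact h1b (by simpa using (sup_eq_bot_iff.mp hb).1)
  have hne : S.Nonempty := by
    by_contra h
    rw [Set.not_nonempty_iff_eq_empty] at h
    rw [tOp, ← hS, h, sSup_empty, Submodule.mem_bot] at h1M
    exact one_ne_zero h1M
  have h1M' : (1 : K) ∈ sSup S := h1M
  obtain ⟨V, ⟨F, hFb, hFf, hFle, rfl⟩, h1F⟩ :=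
    (Submodule.mem_sSup_of_directed hne hdir).mp h1M'
  have hFnP : ¬F ≤ toK R K I.radical := by
    intro hle
    have h1P : (1 : K) ∈ toK R K I.radical :=
      vOp_le_toK_radical I htop htI hFb hFf hle h1F
    obtain ⟨p, hp, hpe⟩ := mem_toK'.mp h1P
    have hp1 : p = 1 := IsFractionRing.injective R K (by rw [hpe, map_one])
    exact hPtop ((Ideal.eq_top_iff_one _).mpr (hp1 ▸ hp))
  obtain ⟨f, hfF, hfP⟩ := SetLike.not_le_iff_exists.mp hFnP
  have hfM : f ∈ M := hFle hfF
  have hdecomp : ∃ A B : K, A ∈ dual (toK R K J) ∧ B ∈ dual (toK R K J) ∧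
      f = algebraMap R K u * A + algebraMap R K w * B := by
    refine Submodule.mul_induction_on hfM ?_ ?_
    · intro g hg z hz
      obtain ⟨j, hj, rfl⟩ := mem_toK'.mp hg
      obtain ⟨α, β, hab⟩ := Ideal.mem_span_pair.mp hj
      refine ⟨α • z, β • z, Submodule.smul_mem _ _ hz, Submodule.smul_mem _ _ hz, ?_⟩
      rw [← hab, map_add, map_mul, map_mul, Algebra.smul_def, Algebra.smul_def]
      ring
    · rintro a b ⟨A1, B1, hA1, hB1, rfl⟩ ⟨A2, B2, hA2, hB2, rfl⟩
      exact ⟨A1 + A2, B1 + B2, add_mem hA1 hA2, add_mem hB1 hB2, by ring⟩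
  obtain ⟨A, B, hA, hB, hf⟩ := hdecomp
  have huJ : algebraMap R K u ∈ toK R K J := mem_toK'.mpr ⟨u, huJ', rfl⟩
  have hwJ : algebraMap R K w ∈ toK R K J := mem_toK'.mpr ⟨w, hwJ', rfl⟩
  obtain ⟨t1, ht1⟩ := Submodule.mem_one.mp (mem_dual'.mp hA _ huJ)
  obtain ⟨t2, ht2⟩ := Submodule.mem_one.mp (mem_dual'.mp hB _ hwJ)
  obtain ⟨c1, hc1⟩ := Submodule.mem_one.mp (mem_dual'.mp hA _ hwJ)
  obtain ⟨c2, hc2⟩ := Submodule.mem_one.mp (mem_dual'.mp hB _ huJ)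
  have hfs : algebraMap R K (t1 + t2) = f := by
    rw [map_add, ht1, ht2, hf]
    ring
  have hst : t1 ∉ I.radical ∨ t2 ∉ I.radical := by
    by_contra h
    push_neg at h
    exact hfP (mem_toK'.mpr ⟨t1 + t2, Ideal.add_mem _ h.1 h.2, hfs⟩)
  rcases hst with h | h
  · refine ⟨t1, c1, h, Or.inl ?_⟩
    apply IsFractionRing.injective R K
    rw [map_mul, map_mul, ht1, hc1]
    ring
  · refine ⟨t2, c2, h, Or.inr ?_⟩
    apply IsFractionRing.injective R K
    rw [map_mul, map_mul, ht2, hc2]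
    ring

end AuxLemmas

/-- Let `R` be a PVMD and `I` a primary `t`-ideal of `R`. If `I⁻¹` is a
subring of `K`, then `I⁻¹ = (I : I)`. -/
theorem statement_9 (hR : IsPVMD R K) (I : Ideal R) (hbot : I ≠ ⊥) (htop : I ≠ ⊤)
    (hprim : I.IsPrimary) (htI : IsTIdeal K I)
    (hring : IsSubringOf (dual (toK R K I))) :
    dual (toK R K I) = toK R K I / toK R K I := by
  have hprim' := Ideal.isPrimary_iff.mp hprim
  apply le_antisymm
  · -- the hard inclusion `I⁻¹ ≤ (I : I)`
    intro x hx
    rw [Submodule.mem_div_iff_forall_mul_mem]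
    intro g hg
    have hpow : ∀ m : ℕ, x ^ m ∈ dual (toK R K I) := by
      intro m
      induction m with
      | zero => simpa using hring.1
      | succ m ih =>
        rw [pow_succ]
        exact hring.2 _ ih _ hx
    have hxg : x * g ∈ (1 : Submodule R K) := mem_dual'.mp hx _ hg
    obtain ⟨r, hr⟩ := Submodule.mem_one.mp hxg
    obtain ⟨a, haI, hag⟩ := mem_toK'.mp hg
    suffices hrI : r ∈ I by exact mem_toK'.mpr ⟨r, hrI, hr⟩
    by_cases hr0 : r = 0
    · exact hr0 ▸ I.zero_mem
    have hg0 : g ≠ 0 := by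
      intro h
      apply hr0
      apply IsFractionRing.injective R K
      rw [hr, h, mul_zero, map_zero]
    have ha0 : a ≠ 0 := fun h => hg0 (by rw [← hag, h, map_zero])
    have he : ∀ m : ℕ, ∃ e : R, algebraMap R K e = x ^ m * g := fun m =>
      Submodule.mem_one.mp (mem_dual'.mp (hpow m) _ hg)
    choose e hee using he
    have hid : ∀ m : ℕ, r ^ (m + 1) = e (m + 1) * a ^ m := by
      intro m
      apply IsFractionRing.injective R K
      rw [map_pow, hr, map_mul, hee, map_pow, hag, mul_pow]
      ring
    obtain ⟨s, c, hsP, hcase⟩ := comparability hR I htop htI ha0 (w := r)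
    rcases hcase with h | h
    · have hsrI : r * s ∈ I := by
        rw [mul_comm, h]
        exact I.mul_mem_left c haI
      rcases hprim'.2 hsrI with h1 | h1
      · exact h1
      · exact absurd h1 hsP
    · have hcrI : r * c ∈ I := by
        rw [mul_comm, ← h]
        exact I.mul_mem_left s haI
      rcases hprim'.2 hcrI with h1 | h1
      · exact h1
      obtain ⟨n, hcn⟩ := Ideal.mem_radical_iff.mp h1
      have key : s ^ n * r = e (n + 1) * c ^ n := by
        have hcancel : s ^ n * r * r ^ n = e (n + 1) * c ^ n * r ^ n := by
          calc s ^ n * r * r ^ n = s ^ n * r ^ (n + 1) := by ring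
          _ = s ^ n * (e (n + 1) * a ^ n) := by rw [hid n]
          _ = e (n + 1) * (s * a) ^ n := by rw [mul_pow]; ring
          _ = e (n + 1) * (c * r) ^ n := by rw [h]
          _ = e (n + 1) * c ^ n * r ^ n := by rw [mul_pow]; ring
        exact mul_right_cancel₀ (pow_ne_zero n hr0) hcancel
      have hrsn : r * s ^ n ∈ I := by
        rw [mul_comm, key]
        exact I.mul_mem_left _ hcn
      rcases hprim'.2 hrsn with h2 | h2
      · exact h2
      · exfalso
        apply hsP
        obtain ⟨m, hm⟩ := Ideal.mem_radical_iff.mp h2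
        rw [← pow_mul] at hm
        exact Ideal.mem_radical_iff.mpr ⟨n * m, hm⟩
  · -- the easy inclusion `(I : I) ≤ I⁻¹`
    intro x hx
    exact mem_dual'.mpr fun y hy =>
      toK_le_one I (Submodule.mem_div_iff_forall_mul_mem.mp hx y hy)

end Statements

end

end PVMDPaper
end
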